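/- Let ω₁, ω₂, ξ₁, ξ₂ ∈ ℂ with ω₁ξ₂ - ω₂ξ₁ ≠ 0. Then the functions ψ_{m,n} (as above) separate points of ℂ² modulo the group generated by L₁, L₂: if ψ_{m,n}(z,y) = ψ_{m,n}(z',y') for all m,n ∈ ℤ, then (z',y') = L₁^a L₂^b (z,y) for some a,b ∈ ℤ. -/

import Mathlib

open Complex

/-- The function `ψ_{m,n}(z,y) = exp[(m(ξ₁z - ω₁y) + n(ξ₂z - ω₂y))/η]`
with `η = (ω₁ξ₂ - ω₂ξ₁)/(2πi)`. -/
noncomputable def psi (ω₁ ω₂ ξ₁ ξ₂ : ℂ) (m n : ℤ) (z y : ℂ) : ℂ :=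
  Complex.exp (((m : ℂ) * (ξ₁ * z - ω₁ * y) + (n : ℂ) * (ξ₂ * z - ω₂ * y)) /
    ((ω₁ * ξ₂ - ω₂ * ξ₁) / (2 * (Real.pi : ℂ) * I)))

/-- if `ω₁ξ₂ - ω₂ξ₁ ≠ 0`, then the family `ψ_{m,n}` separates points of
`ℂ²` modulo the group generated by the translations `L₁, L₂`. -/
theorem stmt4 (ω₁ ω₂ ξ₁ ξ₂ : ℂ) (h : ω₁ * ξ₂ - ω₂ * ξ₁ ≠ 0)
    (z y z' y' : ℂ)
    (hsep : ∀ m n : ℤ, psi ω₁ ω₂ ξ₁ ξ₂ m n z y = psi ω₁ ω₂ ξ₁ ξ₂ m n z' y') :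
    ∃ a b : ℤ, z' = z + (a : ℂ) * ω₁ + (b : ℂ) * ω₂ ∧
               y' = y + (a : ℂ) * ξ₁ + (b : ℂ) * ξ₂ := by
  have hpi : (Real.pi : ℂ) ≠ 0 := by exact_mod_cast Real.pi_ne_zero
  have hI : (I : ℂ) ≠ 0 := I_ne_zero
  obtain ⟨k, hk⟩ := Complex.exp_eq_exp_iff_exists_int.mp (hsep 1 0)
  obtain ⟨l, hl⟩ := Complex.exp_eq_exp_iff_exists_int.mp (hsep 0 1)
  have h' : ω₁ * ξ₂ - ξ₁ * ω₂ ≠ 0 := by rwa [mul_comm ξ₁]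
  field_simp at hk hl
  have h2 : (2 * (Real.pi : ℂ) * I) ≠ 0 := by
    simp [hpi]
  have hD2 : (ω₁ * ξ₂ - ω₂ * ξ₁) * (2 * (Real.pi : ℂ) * I) ≠ 0 := mul_ne_zero h h2
  refine ⟨-l, k, ?_, ?_⟩
  · refine mul_left_cancel₀ hD2 ?_
    push_cast
    linear_combination (2 * (Real.pi : ℂ) * I) * (ω₂ * hk - ω₁ * hl)
  · refine mul_left_cancel₀ hD2 ?_
    push_cast
    linear_combination (2 * (Real.pi : ℂ) * I) * (ξ₂ * hk - ξ₁ * hl)
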